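/- Let B be a skew brace of nilpotent type. Then the following are equivalent: (1) B is annihilator nilpotent; (2) B is both left nilpotent and right nilpotent; (3) B is strongly nilpotent. -/

import Mathlib

/-- A skew brace: a type with two group structures `(B,+)` and `(B,∘)`
(the multiplicative group is written with `*`) sharing the same underlying set,
such that `a ∘ (b + c) = a ∘ b - a + a ∘ c`. -/
class SkewBrace (B : Type*) extends AddGroup B, Group B where
  circ_add : ∀ a b c : B, a * (b + c) = a * b - a + a * c

namespace SkewBrace

variable {B : Type*} [SkewBrace B]

/-- `lam a b = -a + a ∘ b`, i.e. `λ_a(b)`. -/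
def lam (a b : B) : B := -a + a * b

/-- `a * b` (the star operation) `= λ_a(b) - b = -a + a ∘ b - b`. -/
def starOp (a b : B) : B := -a + a * b - b

/-- `X * Y` : the additive subgroup generated by all `x * y`, `x ∈ X`, `y ∈ Y`,
regarded as a set. -/
def starSpan (X Y : Set B) : Set B :=
  (AddSubgroup.closure {z : B | ∃ x ∈ X, ∃ y ∈ Y, z = starOp x y} : AddSubgroup B)

/-- `[X,Y]₊` : the additive subgroup generated by all additive commutators
`x + y - x - y`, `x ∈ X`, `y ∈ Y`, regarded as a set. -/
def addCommSpan (X Y : Set B) : Set B :=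
  (AddSubgroup.closure {z : B | ∃ x ∈ X, ∃ y ∈ Y, z = x + y - x - y} : AddSubgroup B)

/-- A sub skew brace: a subset containing `0` and closed under both group
operations and both inverses. -/
def IsSubSkewBrace (S : Set B) : Prop :=
  0 ∈ S ∧ (∀ a ∈ S, ∀ b ∈ S, a + b ∈ S) ∧ (∀ a ∈ S, -a ∈ S) ∧
    (∀ a ∈ S, ∀ b ∈ S, a * b ∈ S) ∧ (∀ a ∈ S, a⁻¹ ∈ S)

/-- An ideal: a sub skew brace that is normal in `(B,+)` and in `(B,∘)` and
invariant under all `λ_a`. -/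
def IsIdeal (S : Set B) : Prop :=
  IsSubSkewBrace S ∧ (∀ a : B, ∀ i ∈ S, a + i - a ∈ S) ∧
    (∀ a : B, ∀ i ∈ S, a * i * a⁻¹ ∈ S) ∧ (∀ a : B, ∀ i ∈ S, lam a i ∈ S)

/-- The annihilator `Ann(B) = {x | x∘a = a∘x = x+a = a+x for all a}`. -/
def annSet (B : Type*) [SkewBrace B] : Set B :=
  {x | ∀ a : B, x * a = a * x ∧ x * a = x + a ∧ x + a = a + x}

/-- The annihilator series: `Ann₀(B) = 0` and `Ann_{n+1}(B)` is the preimage of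
`Ann(B/Annₙ(B))` under the quotient map; membership is expressed via coset
equalities modulo `Annₙ(B)`. -/
def annSeries (B : Type*) [SkewBrace B] : ℕ → Set B
  | 0 => {0}
  | n + 1 => {x | ∀ a : B,
      x * a - a * x ∈ annSeries B n ∧
      x * a - (x + a) ∈ annSeries B n ∧
      (x + a) - (a + x) ∈ annSeries B n}

/-- `B` is annihilator nilpotent if `Annₙ(B) = B` for some `n`. -/
def AnnNilpotent (B : Type*) [SkewBrace B] : Prop :=
  ∃ n : ℕ, annSeries B n = Set.univ

/-- `leftPow B n` is `B^{n+1}`: `B¹ = B`, `B^{n+1} = B * Bⁿ`. -/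
def leftPow (B : Type*) [SkewBrace B] : ℕ → Set B
  | 0 => Set.univ
  | n + 1 => starSpan Set.univ (leftPow B n)

/-- `rightPow B n` is `B⁽ⁿ⁺¹⁾`: `B⁽¹⁾ = B`, `B⁽ⁿ⁺¹⁾ = B⁽ⁿ⁾ * B`. -/
def rightPow (B : Type*) [SkewBrace B] : ℕ → Set B
  | 0 => Set.univ
  | n + 1 => starSpan (rightPow B n) Set.univ

/-- `B` is left nilpotent if `Bⁿ = 0` for some `n ≥ 1`. -/
def LeftNilpotent (B : Type*) [SkewBrace B] : Prop :=
  ∃ n : ℕ, leftPow B n = ({0} : Set B)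

/-- `B` is right nilpotent if `B⁽ⁿ⁾ = 0` for some `n ≥ 1`. -/
def RightNilpotent (B : Type*) [SkewBrace B] : Prop :=
  ∃ n : ℕ, rightPow B n = ({0} : Set B)

/-- `strongPow B n` is `B^[n+1]`: `B^[1] = B`, and `B^[n+1]` is the additive
subgroup generated by `⋃_{i=1}^{n} B^[i] * B^[n+1-i]`. -/
def strongPow (B : Type*) [SkewBrace B] : ℕ → Set B
  | 0 => Set.univ
  | n + 1 => (AddSubgroup.closure (⋃ j : Fin (n + 1),
      {z : B | ∃ x ∈ strongPow B j.1, ∃ y ∈ strongPow B (n - j.1), z = starOp x y}) :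
        AddSubgroup B)
  decreasing_by
  · exact j.isLt
  · omega

/-- `B` is strongly nilpotent if `B^[n] = 0` for some `n ≥ 1`. -/
def StronglyNilpotent (B : Type*) [SkewBrace B] : Prop :=
  ∃ n : ℕ, strongPow B n = ({0} : Set B)

/-- `gammaAux B n` is `Γ_[n+1](B)`: `Γ_[1](B) = B` and, for `n ≥ 2`, `Γ_[n](B)` is
the additive subgroup generated by the sets `Γ_[i](B) * Γ_[n-i](B)` and
`[Γ_[i](B), Γ_[n-i](B)]₊` for `1 ≤ i ≤ n-1`. -/
def gammaAux (B : Type*) [SkewBrace B] : ℕ → Set B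
  | 0 => Set.univ
  | n + 1 => (AddSubgroup.closure (⋃ j : Fin (n + 1),
      {z : B | ∃ x ∈ gammaAux B j.1, ∃ y ∈ gammaAux B (n - j.1),
        z = starOp x y ∨ z = x + y - x - y}) : AddSubgroup B)
  decreasing_by
  · exact j.isLt
  · omega

/-- `Γ_[n](B)` for `n ≥ 1` (one-based indexing as in the paper). -/
def gammaBr (B : Type*) [SkewBrace B] (n : ℕ) : Set B := gammaAux B (n - 1)

/-- `B` is finitely generated as a skew brace: there is a finite subset whose
smallest containing sub skew brace is `B` itself. -/
def SBFinitelyGenerated (B : Type*) [SkewBrace B] : Prop :=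
  ∃ S : Set B, S.Finite ∧ ∀ T : Set B, IsSubSkewBrace T → S ⊆ T → T = Set.univ

/-- `B` satisfies the ascending chain condition on sub skew braces. -/
def ACCSubSkewBrace (B : Type*) [SkewBrace B] : Prop :=
  ∀ f : ℕ → Set B, (∀ n, IsSubSkewBrace (f n)) → (∀ n, f n ⊆ f (n + 1)) →
    ∃ N : ℕ, ∀ n, N ≤ n → f n = f N


-- ===== auxiliary development =====
open AddSubgroup

theorem circ_zero (a : B) : a * 0 = a := by
  have h := circ_add a 0 0
  rw [add_zero] at h
  exact sub_eq_zero.mp (right_eq_add.mp h)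

theorem one_eq_zero : (1 : B) = 0 := by
  have := circ_zero (1 : B); rw [one_mul] at this; exact this.symm

theorem zero_circ (a : B) : (0 : B) * a = a := by
  rw [← one_eq_zero, one_mul]

theorem lam_add (a b c : B) : lam a (b + c) = lam a b + lam a c := by
  simp only [lam, circ_add, sub_eq_add_neg]
  rw [show a * b + -a + a * c = a * b + (-a + a * c) by rw [add_assoc], ← add_assoc]

theorem lam_zero (a : B) : lam a 0 = 0 := by simp [lam, circ_zero]

theorem lam_neg (a b : B) : lam a (-b) = -lam a b := by
  have h := lam_add a b (-b)
  rw [add_neg_cancel, lam_zero] at h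
  exact eq_neg_of_add_eq_zero_right h.symm

theorem circ_eq_add_lam (a b : B) : a * b = a + lam a b := by simp [lam]

theorem lam_comp (a b c : B) : lam a (lam b c) = lam (a * b) c := by
  have h1 : lam a (lam b c) = lam a (-b) + lam a (b * c) := lam_add a (-b) (b * c)
  rw [lam_neg] at h1
  rw [h1]
  simp only [lam, neg_add_rev, neg_neg, mul_assoc]
  rw [add_assoc, ← add_assoc a (-a), add_neg_cancel, zero_add]

theorem lam_one (b : B) : lam 1 b = b := by simp [lam, one_eq_zero, zero_circ]

theorem lam_lam_inv (a b : B) : lam a (lam a⁻¹ b) = b := by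
  rw [lam_comp, mul_inv_cancel, lam_one]

theorem lam_inv_lam (a b : B) : lam a⁻¹ (lam a b) = b := by
  rw [lam_comp, inv_mul_cancel, lam_one]

theorem lam_inv_self (a : B) : lam a a⁻¹ = -a := by
  have : a * a⁻¹ = a + lam a a⁻¹ := circ_eq_add_lam a a⁻¹
  rw [mul_inv_cancel, one_eq_zero] at this
  exact (neg_eq_of_add_eq_zero_right this.symm).symm

theorem star_eq (a b : B) : starOp a b = lam a b - b := by simp [starOp, lam, sub_eq_add_neg, add_assoc]

theorem star_zero (a : B) : starOp a 0 = 0 := by simp [star_eq, lam_zero]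

theorem zero_star (b : B) : starOp 0 b = 0 := by simp [starOp, zero_circ]

theorem star_add_right (a b c : B) : starOp a (b + c) = starOp a b + b + starOp a c - b := by
  simp only [star_eq, lam_add, sub_eq_add_neg, neg_add_rev]
  rw [show lam a b + -b + b + (lam a c + -c) + -b = lam a b + (-b + b) + (lam a c + -c) + -b by
    simp [add_assoc]]
  simp [add_assoc]

theorem star_neg_right (a b : B) : starOp a (-b) = -b + -starOp a b + b := by
  simp only [star_eq, lam_neg, sub_eq_add_neg, neg_add_rev, neg_neg]
  simp [add_assoc]

theorem circ_star (a b c : B) : starOp (a * b) c = starOp a (starOp b c) + starOp b c + starOp a c := by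
  simp only [star_eq, ← lam_comp, sub_eq_add_neg, lam_add, lam_neg]
  simp [add_assoc]



theorem add_eq_circ (a b : B) : a + b = a * lam a⁻¹ b := by
  rw [circ_eq_add_lam a (lam a⁻¹ b), lam_lam_inv]

/-- left splitting: `(a+b)*c = a*(w*c) + w*c + a*c` with `w = λ_{a⁻¹} b`. -/
theorem add_star (a b c : B) :
    starOp (a + b) c = starOp a (starOp (lam a⁻¹ b) c) + starOp (lam a⁻¹ b) c + starOp a c := by
  rw [add_eq_circ a b]; exact circ_star a (lam a⁻¹ b) c

theorem lam_star (a x y : B) : lam a (starOp x y) = starOp (a * x * a⁻¹) (lam a y) := by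
  have h1 : lam a (starOp x y) = lam (a * x) y - lam a y := by
    rw [star_eq, sub_eq_add_neg, lam_add, lam_neg, lam_comp, ← sub_eq_add_neg]
  have h2 : starOp (a * x * a⁻¹) (lam a y) = lam (a * x * a⁻¹ * a) y - lam a y := by
    rw [star_eq, lam_comp]
  rw [h1, h2, inv_mul_cancel_right]

theorem conj_circ (a b : B) : a * b * a⁻¹ = a + (lam a b + lam a (starOp b a⁻¹)) - a := by
  have h1 : a * b * a⁻¹ = (a * b) + lam (a * b) a⁻¹ := circ_eq_add_lam (a*b) a⁻¹
  rw [← lam_comp] at h1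
  have h2 : lam b a⁻¹ = starOp b a⁻¹ + a⁻¹ := by rw [star_eq, sub_add_cancel]
  rw [h1, h2, lam_add, lam_inv_self, circ_eq_add_lam a b]
  simp [add_assoc, sub_eq_add_neg]

/-- additive conjugate of a star: `c + x*y - c = -(x*c) + x*(c+y)`. -/
theorem conj_star (x y c : B) : c + starOp x y - c = -starOp x c + starOp x (c + y) := by
  simp only [star_eq, lam_add, sub_eq_add_neg, neg_add_rev, neg_neg]
  simp [add_assoc]

/-- `[x₁+x₂, y] = x₁ + [x₂,y] - x₁ + [x₁,y]`. -/
theorem comm_add_left (x₁ x₂ y : B) :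
    (x₁ + x₂) + y - (x₁ + x₂) - y = (x₁ + (x₂ + y - x₂ - y) - x₁) + (x₁ + y - x₁ - y) := by
  simp [sub_eq_add_neg, add_assoc, neg_add_rev]

theorem comm_neg_left (x y : B) :
    (-x) + y - (-x) - y = -x + (-(x + y - x - y)) + x := by
  simp [sub_eq_add_neg, add_assoc, neg_add_rev]

theorem neg_comm (x y : B) : -(x + y - x - y) = y + x - y - x := by
  simp [sub_eq_add_neg, add_assoc, neg_add_rev]

theorem conj_eq_add_comm (c x : B) : c + x - c = x + (-x + c + x - c) := by
  simp [sub_eq_add_neg, add_assoc]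


/-- generic: closure is normal if generators conjugate into it -/
theorem closure_norm (S : Set B) (h : ∀ c z, z ∈ S → c + z - c ∈ closure S) :
    ∀ c x, x ∈ closure S → c + x - c ∈ closure S := by
  intro c x hx
  induction hx using closure_induction with
  | mem z hz => exact h c z hz
  | zero => simpa using (closure S).zero_mem
  | add x y hx hy ihx ihy =>
      have : c + (x + y) - c = (c + x - c) + (c + y - c) := by
        simp [sub_eq_add_neg, add_assoc]
      rw [this]; exact add_mem ihx ihy
  | neg x hx ihx =>
      have : c + (-x) - c = -(c + x - c) := by simp [sub_eq_add_neg, add_assoc]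
      rw [this]; exact neg_mem ihx

/-- generic: closure is λ-invariant if generators are mapped into it -/
theorem closure_lam (S : Set B) (h : ∀ g z, z ∈ S → lam g z ∈ closure S) :
    ∀ g x, x ∈ closure S → lam g x ∈ closure S := by
  intro g x hx
  induction hx using closure_induction with
  | mem z hz => exact h g z hz
  | zero => simpa [lam_zero] using (closure S).zero_mem
  | add x y hx hy ihx ihy => rw [lam_add]; exact add_mem ihx ihy
  | neg x hx ihx => rw [lam_neg]; exact neg_mem ihx

def Rs (B : Type*) [SkewBrace B] : ℕ → AddSubgroup B
  | 0 => ⊤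
  | n + 1 => closure {z : B | ∃ x ∈ (Rs B n : Set B), ∃ y ∈ (Set.univ : Set B), z = starOp x y}

def Ls (B : Type*) [SkewBrace B] : ℕ → AddSubgroup B
  | 0 => ⊤
  | n + 1 => closure {z : B | ∃ x ∈ (Set.univ : Set B), ∃ y ∈ (Ls B n : Set B), z = starOp x y}

def Cs (B : Type*) [SkewBrace B] : ℕ → AddSubgroup B
  | 0 => ⊤
  | n + 1 => closure {z : B | ∃ x ∈ (Cs B n : Set B), ∃ y : B, z = x + y - x - y}

def Gs (B : Type*) [SkewBrace B] : ℕ → AddSubgroup B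
  | 0 => ⊤
  | n + 1 => closure (⋃ j : Fin (n + 1),
      {z : B | ∃ x ∈ (Gs B j.1 : Set B), ∃ y ∈ (Gs B (n - j.1) : Set B),
        z = starOp x y ∨ z = x + y - x - y})
  decreasing_by
  · exact j.isLt
  · omega

def Ss (B : Type*) [SkewBrace B] : ℕ → AddSubgroup B
  | 0 => ⊤
  | n + 1 => closure (⋃ j : Fin (n + 1),
      {z : B | ∃ x ∈ (Ss B j.1 : Set B), ∃ y ∈ (Ss B (n - j.1) : Set B), z = starOp x y})
  decreasing_by
  · exact j.isLt
  · omega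

theorem rightPow_eq : ∀ n, rightPow B n = (Rs B n : Set B)
  | 0 => by simp [rightPow, Rs]
  | (n+1) => by
      rw [rightPow, Rs, starSpan, rightPow_eq n]

theorem leftPow_eq : ∀ n, leftPow B n = (Ls B n : Set B)
  | 0 => by simp [leftPow, Ls]
  | (n+1) => by rw [leftPow, Ls, starSpan, leftPow_eq n]

theorem strongPow_eq : ∀ n, strongPow B n = (Ss B n : Set B) := by
  intro n
  induction n using Nat.strong_induction_on with
  | _ n ih =>
    match n with
    | 0 => simp [strongPow, Ss]
    | (n+1) =>
      rw [strongPow, Ss]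
      have hs : (⋃ j : Fin (n+1), {z : B | ∃ x ∈ strongPow B j.1, ∃ y ∈ strongPow B (n - j.1), z = starOp x y})
          = (⋃ j : Fin (n+1), {z : B | ∃ x ∈ (Ss B j.1 : Set B), ∃ y ∈ (Ss B (n - j.1) : Set B), z = starOp x y}) := by
        apply Set.iUnion_congr; intro j; rw [ih j.1 (by omega), ih (n - j.1) (by omega)]
      rw [hs]

theorem gammaAux_eq : ∀ n, gammaAux B n = (Gs B n : Set B) := by
  intro n
  induction n using Nat.strong_induction_on with
  | _ n ih =>
    match n with
    | 0 => simp [gammaAux, Gs]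
    | (n+1) =>
      rw [gammaAux, Gs]
      have hs : (⋃ j : Fin (n+1), {z : B | ∃ x ∈ gammaAux B j.1, ∃ y ∈ gammaAux B (n - j.1), z = starOp x y ∨ z = x + y - x - y})
          = (⋃ j : Fin (n+1), {z : B | ∃ x ∈ (Gs B j.1 : Set B), ∃ y ∈ (Gs B (n - j.1) : Set B), z = starOp x y ∨ z = x + y - x - y}) := by
        apply Set.iUnion_congr; intro j; rw [ih j.1 (by omega), ih (n - j.1) (by omega)]
      rw [hs]



-- ===== membership and invariance lemmas =====

theorem lam_comm_add (g x y : B) :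
    lam g (x + y - x - y) = lam g x + lam g y - lam g x - lam g y := by
  simp [sub_eq_add_neg, lam_add, lam_neg]

theorem star_mem_Rs {a : ℕ} {x : B} (hx : x ∈ Rs B a) (y : B) :
    starOp x y ∈ Rs B (a + 1) :=
  AddSubgroup.subset_closure ⟨x, hx, y, Set.mem_univ y, rfl⟩

theorem star_mem_Ls {b : ℕ} {y : B} (x : B) (hy : y ∈ Ls B b) :
    starOp x y ∈ Ls B (b + 1) :=
  AddSubgroup.subset_closure ⟨x, Set.mem_univ x, y, hy, rfl⟩

theorem comm_mem_Cs {c : ℕ} {x : B} (hx : x ∈ Cs B c) (y : B) :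
    x + y - x - y ∈ Cs B (c + 1) :=
  AddSubgroup.subset_closure ⟨x, hx, y, rfl⟩

theorem star_mem_Gs {i j : ℕ} {x y : B} (hx : x ∈ Gs B i) (hy : y ∈ Gs B j) :
    starOp x y ∈ Gs B (i + j + 1) := by
  rw [Gs]
  apply AddSubgroup.subset_closure
  refine Set.mem_iUnion.mpr ⟨⟨i, by omega⟩, x, hx, y, ?_, Or.inl rfl⟩
  simpa using hy

theorem comm_mem_Gs {i j : ℕ} {x y : B} (hx : x ∈ Gs B i) (hy : y ∈ Gs B j) :
    x + y - x - y ∈ Gs B (i + j + 1) := by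
  rw [Gs]
  apply AddSubgroup.subset_closure
  refine Set.mem_iUnion.mpr ⟨⟨i, by omega⟩, x, hx, y, ?_, Or.inr rfl⟩
  simpa using hy

theorem star_mem_Ss {i j : ℕ} {x y : B} (hx : x ∈ Ss B i) (hy : y ∈ Ss B j) :
    starOp x y ∈ Ss B (i + j + 1) := by
  rw [Ss]
  apply AddSubgroup.subset_closure
  refine Set.mem_iUnion.mpr ⟨⟨i, by omega⟩, x, hx, y, ?_, rfl⟩
  simpa using hy

theorem Rs_succ_le : ∀ n, Rs B (n + 1) ≤ Rs B n := by
  intro n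
  induction n with
  | zero => exact le_top
  | succ n ih =>
      rw [Rs]
      refine (AddSubgroup.closure_le _).mpr ?_
      rintro z ⟨x, hx, y, -, rfl⟩
      exact star_mem_Rs (ih hx) y

theorem Ls_succ_le : ∀ n, Ls B (n + 1) ≤ Ls B n := by
  intro n
  induction n with
  | zero => exact le_top
  | succ n ih =>
      rw [Ls]
      refine (AddSubgroup.closure_le _).mpr ?_
      rintro z ⟨x, -, y, hy, rfl⟩
      exact star_mem_Ls x (ih hy)

theorem Cs_succ_le : ∀ n, Cs B (n + 1) ≤ Cs B n := by
  intro n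
  induction n with
  | zero => exact le_top
  | succ n ih =>
      rw [Cs]
      refine (AddSubgroup.closure_le _).mpr ?_
      rintro z ⟨x, hx, y, rfl⟩
      exact comm_mem_Cs (ih hx) y

theorem Gs_succ_le : ∀ n, Gs B (n + 1) ≤ Gs B n := by
  intro n
  induction n using Nat.strong_induction_on with
  | _ n ih =>
    match n with
    | 0 => intro x hx; rw [Gs]; trivial
    | (n+1) =>
      rw [Gs]
      refine (AddSubgroup.closure_le _).mpr ?_
      intro z hz
      obtain ⟨j, hzj⟩ := Set.mem_iUnion.mp hz
      obtain ⟨jv, hjlt⟩ := j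
      simp only at hzj
      obtain ⟨x, hx, y, hy, hz'⟩ := hzj
      match jv, hjlt with
      | 0, _ =>
          have hy' : y ∈ Gs B n := ih n (by omega) (by simpa using hy)
          have hx' : x ∈ Gs B 0 := hx
          rcases hz' with rfl | rfl
          · simpa using star_mem_Gs hx' hy'
          · simpa using comm_mem_Gs hx' hy'
      | (k+1), hk =>
          have hx' : x ∈ Gs B k := ih k (by omega) hx
          have hy' : y ∈ Gs B (n + 1 - (k+1)) := hy
          rcases hz' with rfl | rfl
          · have := star_mem_Gs hx' hy'
            rwa [show k + (n + 1 - (k+1)) + 1 = n + 1 by omega] at this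
          · have := comm_mem_Gs hx' hy'
            rwa [show k + (n + 1 - (k+1)) + 1 = n + 1 by omega] at this

theorem Rs_anti {a b : ℕ} (h : a ≤ b) : Rs B b ≤ Rs B a := by
  induction b with
  | zero => cases Nat.le_zero.mp h; exact le_refl _
  | succ n ih =>
      rcases Nat.lt_or_ge a (n+1) with h' | h'
      · exact (Rs_succ_le n).trans (ih (by omega))
      · have : a = n + 1 := by omega
        subst this; exact le_refl _

theorem Ls_anti {a b : ℕ} (h : a ≤ b) : Ls B b ≤ Ls B a := by
  induction b with
  | zero => cases Nat.le_zero.mp h; exact le_refl _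
  | succ n ih =>
      rcases Nat.lt_or_ge a (n+1) with h' | h'
      · exact (Ls_succ_le n).trans (ih (by omega))
      · have : a = n + 1 := by omega
        subst this; exact le_refl _

theorem Cs_anti {a b : ℕ} (h : a ≤ b) : Cs B b ≤ Cs B a := by
  induction b with
  | zero => cases Nat.le_zero.mp h; exact le_refl _
  | succ n ih =>
      rcases Nat.lt_or_ge a (n+1) with h' | h'
      · exact (Cs_succ_le n).trans (ih (by omega))
      · have : a = n + 1 := by omega
        subst this; exact le_refl _

theorem Gs_anti {a b : ℕ} (h : a ≤ b) : Gs B b ≤ Gs B a := by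
  induction b with
  | zero => cases Nat.le_zero.mp h; exact le_refl _
  | succ n ih =>
      rcases Nat.lt_or_ge a (n+1) with h' | h'
      · exact (Gs_succ_le n).trans (ih (by omega))
      · have : a = n + 1 := by omega
        subst this; exact le_refl _


-- ===== normality and λ-invariance =====

theorem Rs_normal : ∀ n, ∀ c x : B, x ∈ Rs B n → c + x - c ∈ Rs B n := by
  intro n
  match n with
  | 0 => intro c x _; rw [Rs]; trivial
  | (n+1) =>
      intro c x hx
      refine closure_norm _ ?_ c x hx
      rintro c z ⟨x, hx, y, -, rfl⟩
      rw [conj_star]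
      exact add_mem (neg_mem (AddSubgroup.subset_closure ⟨x, hx, c, Set.mem_univ c, rfl⟩))
        (AddSubgroup.subset_closure ⟨x, hx, c + y, Set.mem_univ _, rfl⟩)

theorem Cs_normal : ∀ n, ∀ c x : B, x ∈ Cs B n → c + x - c ∈ Cs B n := by
  intro n
  match n with
  | 0 => intro c x _; rw [Cs]; trivial
  | (n+1) =>
      intro c x hx
      rw [conj_eq_add_comm]
      refine add_mem hx ?_
      have h1 : -x + c - (-x) - c ∈ Cs B (n+1+1) := comm_mem_Cs (neg_mem hx) c
      have h2 : -x + c - (-x) - c = -x + c + x - c := by simp [sub_eq_add_neg]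
      rw [h2] at h1
      exact Cs_succ_le (n+1) h1

theorem Gs_normal (n : ℕ) (c x : B) (hx : x ∈ Gs B n) : c + x - c ∈ Gs B n := by
  rw [conj_eq_add_comm]
  refine add_mem hx ?_
  have h1 : -x + c - (-x) - c ∈ Gs B (n + 0 + 1) := comm_mem_Gs (neg_mem hx) (by rw [Gs]; trivial)
  have h2 : -x + c - (-x) - c = -x + c + x - c := by simp [sub_eq_add_neg]
  rw [h2] at h1
  exact Gs_anti (by omega) h1

theorem Ls_lam : ∀ n, ∀ g x : B, x ∈ Ls B n → lam g x ∈ Ls B n := by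
  intro n
  induction n with
  | zero => intro g x _; rw [Ls]; trivial
  | succ n ih =>
      intro g x hx
      refine closure_lam _ ?_ g x hx
      rintro g z ⟨x, -, y, hy, rfl⟩
      rw [lam_star]
      exact AddSubgroup.subset_closure ⟨g * x * g⁻¹, Set.mem_univ _, lam g y, ih g y hy, rfl⟩

theorem Cs_lam : ∀ n, ∀ g x : B, x ∈ Cs B n → lam g x ∈ Cs B n := by
  intro n
  induction n with
  | zero => intro g x _; rw [Cs]; trivial
  | succ n ih =>
      intro g x hx
      refine closure_lam _ ?_ g x hx
      rintro g z ⟨x, hx, y, rfl⟩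
      rw [lam_comm_add]
      exact AddSubgroup.subset_closure ⟨lam g x, ih g x hx, lam g y, rfl⟩

theorem Rs_lam_circ : ∀ n, (∀ g x : B, x ∈ Rs B n → lam g x ∈ Rs B n) ∧
    (∀ g x : B, x ∈ Rs B n → g * x * g⁻¹ ∈ Rs B n) := by
  intro n
  induction n with
  | zero => exact ⟨fun g x _ => by rw [Rs]; trivial, fun g x _ => by rw [Rs]; trivial⟩
  | succ n ih =>
      have hlam : ∀ g x : B, x ∈ Rs B (n+1) → lam g x ∈ Rs B (n+1) := by
        intro g x hx
        refine closure_lam _ ?_ g x hx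
        rintro g z ⟨x, hx, y, -, rfl⟩
        rw [lam_star]
        exact AddSubgroup.subset_closure ⟨g * x * g⁻¹, ih.2 g x hx, lam g y, Set.mem_univ _, rfl⟩
      refine ⟨hlam, ?_⟩
      intro g x hx
      rw [conj_circ]
      refine Rs_normal (n+1) g _ (add_mem (hlam g x hx) (hlam g _ ?_))
      exact Rs_succ_le (n+1) (star_mem_Rs hx g⁻¹)

theorem Rs_lam (n : ℕ) : ∀ g x : B, x ∈ Rs B n → lam g x ∈ Rs B n := (Rs_lam_circ n).1

theorem Gs_lam_circ : ∀ n, (∀ g x : B, x ∈ Gs B n → lam g x ∈ Gs B n) ∧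
    (∀ g x : B, x ∈ Gs B n → g * x * g⁻¹ ∈ Gs B n) := by
  intro n
  induction n using Nat.strong_induction_on with
  | _ n ih =>
    match n with
    | 0 => exact ⟨fun g x _ => by rw [Gs]; trivial, fun g x _ => by rw [Gs]; trivial⟩
    | (n+1) =>
      have hlam : ∀ g x : B, x ∈ Gs B (n+1) → lam g x ∈ Gs B (n+1) := by
        intro g x hx
        rw [Gs] at hx ⊢
        refine closure_lam _ ?_ g x hx
        intro g z hz
        obtain ⟨j, hzj⟩ := Set.mem_iUnion.mp hz
        obtain ⟨x, hx, y, hy, hz'⟩ := hzj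
        apply AddSubgroup.subset_closure
        refine Set.mem_iUnion.mpr ⟨j, ?_⟩
        rcases hz' with rfl | rfl
        · refine ⟨g * x * g⁻¹, (ih j.1 (by omega)).2 g x hx, lam g y,
            (ih (n - j.1) (by omega)).1 g y hy, Or.inl (lam_star g x y)⟩
        · refine ⟨lam g x, (ih j.1 (by omega)).1 g x hx, lam g y,
            (ih (n - j.1) (by omega)).1 g y hy, Or.inr (lam_comm_add g x y)⟩
      refine ⟨hlam, ?_⟩
      intro g x hx
      rw [conj_circ]
      refine Gs_normal (n+1) g _ (add_mem (hlam g x hx) (hlam g _ ?_))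
      have := star_mem_Gs hx (show g⁻¹ ∈ Gs B 0 by rw [Gs]; trivial)
      exact Gs_anti (by omega) this

theorem Gs_lam (n : ℕ) : ∀ g x : B, x ∈ Gs B n → lam g x ∈ Gs B n := (Gs_lam_circ n).1


theorem Ls_zero : Ls B 0 = ⊤ := by rw [Ls]
theorem Rs_zero : Rs B 0 = ⊤ := by rw [Rs]
theorem Cs_zero : Cs B 0 = ⊤ := by rw [Cs]
theorem Gs_zero : Gs B 0 = ⊤ := by rw [Gs]
theorem Ss_zero : Ss B 0 = ⊤ := by rw [Ss]
theorem mem_Ls_zero (x : B) : x ∈ Ls B 0 := by rw [Ls_zero]; trivial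
theorem mem_Cs_zero (x : B) : x ∈ Cs B 0 := by rw [Cs_zero]; trivial
theorem mem_Gs_zero (x : B) : x ∈ Gs B 0 := by rw [Gs_zero]; trivial

-- ===== identities for the annihilator series =====

theorem id_E3 (x a : B) : (x + a) - (a + x) = x + a - x - a := by
  simp [sub_eq_add_neg, neg_add_rev, add_assoc]

theorem id_E2 (x a : B) : x * a - (x + a) = x + starOp x a - x := by
  rw [circ_eq_add_lam, star_eq]
  simp [sub_eq_add_neg, neg_add_rev, add_assoc]

theorem id_E1 (x a : B) : x * a - a * x =
    (x + starOp x a - x) + ((x + a - x - a) + (a + (-(starOp a x)) - a)) := by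
  rw [circ_eq_add_lam x a, circ_eq_add_lam a x, star_eq, star_eq]
  simp [sub_eq_add_neg, neg_add_rev, add_assoc]

theorem id_lam_conj (g x : B) : lam g x =
    x + ((-x + -g + -(x * g - g * x) + g + x) +
      ((-x + -g + x + g) + (-g + starOp x g + g))) := by
  simp only [lam, starOp, sub_eq_add_neg, neg_add_rev, neg_neg]
  simp [add_assoc]


-- ===== the annihilator series is a chain of ideals =====

structure AnnPack (B : Type*) [SkewBrace B] (k : ℕ) : Prop where
  zero : (0:B) ∈ annSeries B k
  add : ∀ {x y : B}, x ∈ annSeries B k → y ∈ annSeries B k → x + y ∈ annSeries B k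
  neg : ∀ {x : B}, x ∈ annSeries B k → -x ∈ annSeries B k
  norm : ∀ (c : B) {x : B}, x ∈ annSeries B k → c + x - c ∈ annSeries B k
  lamm : ∀ (g : B) {x : B}, x ∈ annSeries B k → lam g x ∈ annSeries B k
  starl : ∀ {x : B}, x ∈ annSeries B k → ∀ a, starOp x a ∈ annSeries B k
  starr : ∀ {x : B}, x ∈ annSeries B k → ∀ a, starOp a x ∈ annSeries B k
  commabs : ∀ {x : B}, x ∈ annSeries B k → ∀ a, x + a - x - a ∈ annSeries B k
  mono : annSeries B k ⊆ annSeries B (k+1)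

theorem AnnPack.sub {k : ℕ} (P : AnnPack B k) {x y : B} (hx : x ∈ annSeries B k)
    (hy : y ∈ annSeries B k) : x - y ∈ annSeries B k := by
  rw [sub_eq_add_neg]; exact P.add hx (P.neg hy)

theorem mem_ann_succ {k : ℕ} {x : B} :
    x ∈ annSeries B (k+1) ↔ ∀ a : B,
      x * a - a * x ∈ annSeries B k ∧ x * a - (x + a) ∈ annSeries B k ∧
      (x + a) - (a + x) ∈ annSeries B k := Iff.rfl

/-- reduced membership criterion for the annihilator series -/
theorem mem_ann_succ_iff {k : ℕ} (P : AnnPack B k) {x : B} :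
    x ∈ annSeries B (k+1) ↔ ∀ a : B,
      starOp x a ∈ annSeries B k ∧ starOp a x ∈ annSeries B k ∧
      x + a - x - a ∈ annSeries B k := by
  rw [mem_ann_succ]
  constructor
  · intro h a
    obtain ⟨h1, h2, h3⟩ := h a
    rw [id_E2] at h2
    rw [id_E3] at h3
    have hs1 : starOp x a ∈ annSeries B k := by
      have := P.norm (-x) h2
      have he : -x + (x + starOp x a - x) - (-x) = starOp x a := by
        simp [sub_eq_add_neg, add_assoc]
      rwa [he] at this
    refine ⟨hs1, ?_, h3⟩
    have hP' : x + starOp x a - x ∈ annSeries B k := P.norm x hs1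
    have hQ : a + (-(starOp a x)) - a ∈ annSeries B k := by
      have : a + (-(starOp a x)) - a =
          -(x + a - x - a) + (-(x + starOp x a - x) + (x * a - a * x)) := by
        rw [id_E1]; simp [sub_eq_add_neg, add_assoc]
      rw [this]
      exact P.add (P.neg h3) (P.add (P.neg hP') h1)
    have := P.norm (-a) hQ
    have he : -a + (a + (-(starOp a x)) - a) - (-a) = -(starOp a x) := by
      simp [sub_eq_add_neg, add_assoc]
    rw [he] at this
    simpa using P.neg this
  · intro h a
    obtain ⟨h1, h2, h3⟩ := h a
    rw [id_E2, id_E3, id_E1]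
    exact ⟨P.add (P.norm x h1) (P.add h3 (P.norm a (P.neg h2))), P.norm x h1, h3⟩


theorem annPack : ∀ k, AnnPack B k := by
  intro k
  induction k with
  | zero =>
      have hmem : ∀ x : B, x ∈ annSeries B 0 ↔ x = 0 := fun x => Set.mem_singleton_iff
      refine ⟨rfl, ?_, ?_, ?_, ?_, ?_, ?_, ?_, ?_⟩
      · intro x y hx hy
        rw [hmem] at hx hy ⊢; rw [hx, hy, add_zero]
      · intro x hx; rw [hmem] at hx ⊢; rw [hx, neg_zero]
      · intro c x hx; rw [hmem] at hx ⊢; rw [hx]; simp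
      · intro g x hx; rw [hmem] at hx ⊢; rw [hx, lam_zero]
      · intro x hx a; rw [hmem] at hx ⊢; rw [hx, zero_star]
      · intro x hx a; rw [hmem] at hx ⊢; rw [hx, star_zero]
      · intro x hx a; rw [hmem] at hx ⊢; rw [hx]; simp
      · intro x hx
        rw [hmem] at hx; subst hx
        rw [mem_ann_succ]
        intro a
        refine ⟨?_, ?_, ?_⟩ <;> · simp only [zero_circ, circ_zero, zero_add, add_zero, sub_self]
                                  exact rfl
  | succ k P =>
      have M := fun {x : B} => mem_ann_succ_iff (k := k) P (x := x)
      -- absorb on the right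
      have absorb_r : ∀ {x α : B}, x ∈ annSeries B (k+1) → α ∈ annSeries B k →
          x + α ∈ annSeries B (k+1) := by
        intro x α hx hα
        rw [M]; intro a
        refine ⟨?_, ?_, ?_⟩
        · rw [add_star]
          exact P.add (P.add ((M.mp hx) _).1 (P.starl (P.lamm _ hα) a)) ((M.mp hx) a).1
        · rw [star_add_right]
          have he : starOp a x + x + starOp a α - x = starOp a x + (x + starOp a α - x) := by
            simp [sub_eq_add_neg, add_assoc]
          rw [he]
          exact P.add ((M.mp hx) a).2.1 (P.norm x (P.starr hα a))
        · rw [comm_add_left]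
          exact P.add (P.norm x (P.commabs hα a)) ((M.mp hx) a).2.2
      -- λ-stability
      have lam_stab : ∀ (g : B) {x : B}, x ∈ annSeries B (k+1) → lam g x ∈ annSeries B (k+1) := by
        intro g x hx
        have hε : x * g - g * x ∈ annSeries B k := (mem_ann_succ.mp hx g).1
        have hs : starOp x g ∈ annSeries B k := ((M.mp hx) g).1
        have hcomm : ∀ a : B, x + a - x - a ∈ annSeries B k := fun a => ((M.mp hx) a).2.2
        have hQ1 : -x + -g + x + g ∈ annSeries B k := by
          have h1 := P.norm (-x) (P.neg (hcomm (-g)))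
          have he : -x + -(x + -g - x - -g) - -x = -x + -g + x + g := by
            simp [sub_eq_add_neg, neg_add_rev, add_assoc]
          rwa [he] at h1
        have hP1 : -x + -g + -(x * g - g * x) + g + x ∈ annSeries B k := by
          have h1 := P.norm (-x + -g) (P.neg hε)
          have he : -x + -g + -(x * g - g * x) - (-x + -g) =
              -x + -g + -(x * g - g * x) + g + x := by
            simp [sub_eq_add_neg, neg_add_rev, add_assoc]
          rwa [he] at h1
        have hR1 : -g + starOp x g + g ∈ annSeries B k := by
          have h1 := P.norm (-g) hs
          have he : -g + starOp x g - -g = -g + starOp x g + g := by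
            simp [sub_eq_add_neg]
          rwa [he] at h1
        rw [id_lam_conj]
        exact absorb_r hx (P.add hP1 (P.add hQ1 hR1))
      -- absorb on the left
      have absorb_l : ∀ {α x : B}, α ∈ annSeries B k → x ∈ annSeries B (k+1) →
          α + x ∈ annSeries B (k+1) := by
        intro α x hα hx
        rw [M]; intro a
        have hw : lam α⁻¹ x ∈ annSeries B (k+1) := lam_stab _ hx
        refine ⟨?_, ?_, ?_⟩
        · rw [add_star]
          exact P.add (P.add (P.starl hα _) ((M.mp hw) a).1) (P.starl hα a)
        · rw [star_add_right]
          have he : starOp a α + α + starOp a x - α = starOp a α + (α + starOp a x - α) := by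
            simp [sub_eq_add_neg, add_assoc]
          rw [he]
          exact P.add (P.starr hα a) (P.norm α ((M.mp hx) a).2.1)
        · rw [comm_add_left]
          exact P.add (P.norm α ((M.mp hx) a).2.2) (P.commabs hα a)
      refine ⟨?_, ?_, ?_, ?_, lam_stab, ?_, ?_, ?_, ?_⟩
      · -- zero
        rw [M]; intro a
        refine ⟨?_, ?_, ?_⟩
        · rw [zero_star]; exact P.zero
        · rw [star_zero]; exact P.zero
        · have : (0:B) + a - 0 - a = 0 := by simp
          rw [this]; exact P.zero
      · -- add
        intro x y hx hy
        rw [M]; intro a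
        have hw : lam x⁻¹ y ∈ annSeries B (k+1) := lam_stab _ hy
        refine ⟨?_, ?_, ?_⟩
        · rw [add_star]
          exact P.add (P.add ((M.mp hx) _).1 ((M.mp hw) a).1) ((M.mp hx) a).1
        · rw [star_add_right]
          have he : starOp a x + x + starOp a y - x = starOp a x + (x + starOp a y - x) := by
            simp [sub_eq_add_neg, add_assoc]
          rw [he]
          exact P.add ((M.mp hx) a).2.1 (P.norm x ((M.mp hy) a).2.1)
        · rw [comm_add_left]
          exact P.add (P.norm x ((M.mp hy) a).2.2) ((M.mp hx) a).2.2
      · -- neg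
        intro x hx
        rw [M]; intro a
        have hr : lam (-x)⁻¹ x ∈ annSeries B (k+1) := lam_stab _ hx
        refine ⟨?_, ?_, ?_⟩
        · have h0 := add_star (-x) x a
          rw [neg_add_cancel, zero_star] at h0
          have hA : starOp (-x) (starOp (lam (-x)⁻¹ x) a) ∈ annSeries B k := by
            rw [star_eq]
            exact P.sub (P.lamm _ ((M.mp hr) a).1) ((M.mp hr) a).1
          have hB : starOp (lam (-x)⁻¹ x) a ∈ annSeries B k := ((M.mp hr) a).1
          have he : starOp (-x) a =
              -(starOp (lam (-x)⁻¹ x) a) + -(starOp (-x) (starOp (lam (-x)⁻¹ x) a)) := by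
            have h2 := eq_neg_of_add_eq_zero_left h0.symm
            rw [← neg_add_rev, h2, neg_neg]
          rw [he]
          exact P.add (P.neg hB) (P.neg hA)
        · rw [star_neg_right]
          have h1 := P.norm (-x) (P.neg ((M.mp hx) a).2.1)
          have he : -x + -(starOp a x) - -x = -x + -(starOp a x) + x := by
            simp [sub_eq_add_neg]
          rwa [he] at h1
        · rw [comm_neg_left]
          have h1 := P.norm (-x) (P.neg ((M.mp hx) a).2.2)
          have he : -x + -(x + a - x - a) - -x = -x + -(x + a - x - a) + x := by
            simp [sub_eq_add_neg]
          rwa [he] at h1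
      · -- norm
        intro c x hx
        rw [conj_eq_add_comm]
        refine absorb_r hx ?_
        have h1 := P.norm (-x) (P.neg (((M.mp hx) c).2.2))
        have he : -x + -(x + c - x - c) - -x = -x + c + x - c := by
          simp [sub_eq_add_neg, neg_add_rev, add_assoc]
        rwa [he] at h1
      · -- starl
        intro x hx a
        exact P.mono ((M.mp hx) a).1
      · -- starr
        intro x hx a
        exact P.mono ((M.mp hx) a).2.1
      · -- commabs
        intro x hx a
        exact P.mono ((M.mp hx) a).2.2
      · -- mono
        intro x hx
        rw [mem_ann_succ]
        intro a
        obtain ⟨h1, h2, h3⟩ := mem_ann_succ.mp hx a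
        exact ⟨P.mono h1, P.mono h2, P.mono h3⟩


-- ===== bundled annihilator series, Ann → Strong, Strong → Left/Right =====

theorem annSeries_zero : annSeries B 0 = ({0} : Set B) := rfl

def annSub (B : Type*) [SkewBrace B] (k : ℕ) : AddSubgroup B where
  carrier := annSeries B k
  add_mem' := (annPack k).add
  zero_mem' := (annPack k).zero
  neg_mem' := fun h => (annPack _).neg h

theorem mem_annSub {k : ℕ} {x : B} : x ∈ annSub B k ↔ x ∈ annSeries B k := Iff.rfl

theorem ann_to_strong (h : AnnNilpotent B) : StronglyNilpotent B := by
  obtain ⟨c, hc⟩ := h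
  have key : ∀ k n, 2^k - 1 ≤ n → (Ss B n : Set B) ⊆ annSeries B (c - k) := by
    intro k
    induction k with
    | zero => intro n _; simp only [Nat.sub_zero, hc]; exact fun x _ => Set.mem_univ x
    | succ k ih =>
        intro n hn
        match n, hn with
        | 0, hn =>
            exfalso
            have h1 : 1 ≤ 2^k := Nat.one_le_two_pow
            have h2 : (2:ℕ)^(k+1) = 2^k + 2^k := by ring
            omega
        | (m+1), hn =>
          have hsub : Ss B (m+1) ≤ annSub B (c - (k+1)) := by
            rw [Ss]
            refine (AddSubgroup.closure_le _).mpr ?_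
            intro z hz
            obtain ⟨j, hzj⟩ := Set.mem_iUnion.mp hz
            obtain ⟨x, hx, y, hy, rfl⟩ := hzj
            have hmax : 2^k - 1 ≤ (j:ℕ) ∨ 2^k - 1 ≤ m - (j:ℕ) := by
              have h2 : (2:ℕ)^(k+1) = 2^k + 2^k := by ring
              have hj := j.isLt
              omega
            rcases Nat.eq_zero_or_pos (c - k) with hck | hck
            · -- annSeries (c-k) = {0} case is impossible unless things are 0
              rcases hmax with hj | hj
              · have hx0 : x ∈ annSeries B (c - k) := ih (j:ℕ) hj hx
                rw [hck, annSeries_zero] at hx0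
                rw [Set.mem_singleton_iff] at hx0
                show starOp x y ∈ annSeries B (c - (k+1))
                rw [hx0, zero_star]
                exact (annPack _).zero
              · have hy0 : y ∈ annSeries B (c - k) := ih (m - (j:ℕ)) hj hy
                rw [hck, annSeries_zero] at hy0
                rw [Set.mem_singleton_iff] at hy0
                show starOp x y ∈ annSeries B (c - (k+1))
                rw [hy0, star_zero]
                exact (annPack _).zero
            · have hck' : c - k = (c - (k+1)) + 1 := by omega
              rcases hmax with hj | hj
              · have hx0 : x ∈ annSeries B (c - k) := ih (j:ℕ) hj hx
                rw [hck'] at hx0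
                exact ((mem_ann_succ_iff (annPack _)).mp hx0 y).1
              · have hy0 : y ∈ annSeries B (c - k) := ih (m - (j:ℕ)) hj hy
                rw [hck'] at hy0
                exact ((mem_ann_succ_iff (annPack _)).mp hy0 x).2.1
          exact fun x hx => hsub hx
  refine ⟨2^c - 1, ?_⟩
  have h1 : (Ss B (2^c - 1) : Set B) ⊆ annSeries B 0 := by
    have := key c (2^c - 1) (le_refl _)
    rwa [Nat.sub_self] at this
  rw [annSeries_zero] at h1
  rw [strongPow_eq]
  refine subset_antisymm h1 ?_
  intro x hx
  rw [Set.mem_singleton_iff] at hx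
  rw [hx]
  exact SetLike.mem_coe.mpr (zero_mem _)

theorem Ls_le_Ss : ∀ n, Ls B n ≤ Ss B n := by
  intro n
  induction n with
  | zero => intro x _; rw [Ss]; trivial
  | succ n ih =>
      rw [Ls]
      refine (AddSubgroup.closure_le _).mpr ?_
      rintro z ⟨x, -, y, hy, rfl⟩
      simpa using star_mem_Ss (show x ∈ Ss B 0 by rw [Ss]; trivial) (ih hy)

theorem Rs_le_Ss : ∀ n, Rs B n ≤ Ss B n := by
  intro n
  induction n with
  | zero => intro x _; rw [Ss]; trivial
  | succ n ih =>
      rw [Rs]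
      refine (AddSubgroup.closure_le _).mpr ?_
      rintro z ⟨x, hx, y, -, rfl⟩
      have := star_mem_Ss (ih hx) (show y ∈ Ss B 0 by rw [Ss]; trivial)
      rwa [Nat.add_zero] at this

theorem strong_to_left_right (h : StronglyNilpotent B) : LeftNilpotent B ∧ RightNilpotent B := by
  obtain ⟨n, hn⟩ := h
  rw [strongPow_eq] at hn
  constructor
  · refine ⟨n, ?_⟩
    rw [leftPow_eq]
    refine subset_antisymm ?_ ?_
    · intro x hx
      rw [← hn]
      exact Ls_le_Ss n hx
    · intro x hx
      rw [Set.mem_singleton_iff] at hx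
      rw [hx]; exact SetLike.mem_coe.mpr (zero_mem _)
  · refine ⟨n, ?_⟩
    rw [rightPow_eq]
    refine subset_antisymm ?_ ?_
    · intro x hx
      rw [← hn]
      exact Rs_le_Ss n hx
    · intro x hx
      rw [Set.mem_singleton_iff] at hx
      rw [hx]; exact SetLike.mem_coe.mpr (zero_mem _)


-- ===== additive lower central series vs nilpotency of (B,+) =====

def subToAdd (B : Type*) [SkewBrace B] (H : Subgroup (Multiplicative B)) : AddSubgroup B where
  carrier := {x : B | Multiplicative.ofAdd x ∈ H}
  zero_mem' := H.one_mem
  add_mem' := fun hx hy => H.mul_mem hx hy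
  neg_mem' := fun hx => H.inv_mem hx

open scoped commutatorElement in
theorem Cs_le_lcs : ∀ n, Cs B n ≤ subToAdd B (Subgroup.lowerCentralSeries (⊤ : Subgroup (Multiplicative B)) n) := by
  intro n
  induction n with
  | zero => intro x _; exact Subgroup.mem_top _
  | succ n ih =>
      rw [Cs]
      refine (AddSubgroup.closure_le _).mpr ?_
      rintro z ⟨x, hx, y, rfl⟩
      have key : Multiplicative.ofAdd (x + y - x - y) ∈
          Subgroup.lowerCentralSeries (⊤ : Subgroup (Multiplicative B)) (n+1) := by
        have he : Multiplicative.ofAdd (x + y - x - y) =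
            ⁅Multiplicative.ofAdd x, Multiplicative.ofAdd y⁆ := by
          show x + y - x - y = x + y + -x + -y
          simp [sub_eq_add_neg]
        rw [he, Subgroup.lowerCentralSeries_succ]
        exact Subgroup.commutator_mem_commutator (ih hx) (Subgroup.mem_top _)
      exact key

theorem Cs_bot_of_nilpotent (hnt : Group.IsNilpotent (Multiplicative B)) :
    ∃ t, Cs B t = ⊥ := by
  obtain ⟨t, ht⟩ := nilpotent_iff_lowerCentralSeries.mp hnt
  refine ⟨t, ?_⟩
  refine le_antisymm ?_ bot_le
  intro x hx
  have := Cs_le_lcs t hx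
  rw [ht] at this
  have hx0 : Multiplicative.ofAdd x = 1 := Subgroup.mem_bot.mp this
  simpa using hx0


-- ===== the star-left closure lemma =====

theorem star_left_key (X : Set B) (hXlam : ∀ (g : B) (x : B), x ∈ X → lam g x ∈ X)
    (H : AddSubgroup B) (Y : ℕ → Set B)
    (hYstep : ∀ j (v : B), ∀ y ∈ Y j, starOp v y ∈ Y (j+1))
    (K : ℕ) (hYK : ∀ j, K ≤ j → ∀ y ∈ Y j, y = 0)
    (hXY : ∀ x ∈ X, ∀ j, ∀ y ∈ Y j, starOp x y ∈ H) :
    ∀ j z, z ∈ AddSubgroup.closure X → ∀ y ∈ Y j, starOp z y ∈ H := by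
  suffices h : ∀ d j, K ≤ j + d → ∀ z, z ∈ AddSubgroup.closure X →
      ∀ (g : B), ∀ y ∈ Y j, starOp (lam g z) y ∈ H by
    intro j z hz y hy
    rcases Nat.le_total K j with hKj | hKj
    · rw [hYK j hKj y hy, star_zero]; exact H.zero_mem
    · have := h (K - j) j (by omega) z hz 1 y hy
      rwa [lam_one] at this
  intro d
  induction d with
  | zero =>
      intro j hj z _ g y hy
      rw [hYK j (by omega) y hy, star_zero]; exact H.zero_mem
  | succ d ihd =>
      intro j hj z hz
      induction hz using AddSubgroup.closure_induction with
      | mem x hxX => intro g y hy; exact hXY _ (hXlam g x hxX) j y hy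
      | zero => intro g y hy; rw [lam_zero, zero_star]; exact H.zero_mem
      | add z₁ z₂ hz₁ hz₂ ih₁ ih₂ =>
          intro g y hy
          rw [lam_add, add_star]
          rw [lam_comp]
          refine H.add_mem (H.add_mem ?_ (ih₂ _ y hy)) (ih₁ g y hy)
          exact ihd (j+1) (by omega) z₁ hz₁ g _ (hYstep j _ y hy)
      | neg z hz ih =>
          intro g y hy
          rw [lam_neg]
          have h0 := add_star (-(lam g z)) (lam g z) y
          rw [neg_add_cancel, zero_star] at h0
          have h2 := eq_neg_of_add_eq_zero_left h0.symm
          have he : starOp (-(lam g z)) y =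
              -(starOp (lam (-(lam g z))⁻¹ (lam g z)) y) +
              -(starOp (-(lam g z)) (starOp (lam (-(lam g z))⁻¹ (lam g z)) y)) := by
            rw [← neg_add_rev, h2, neg_neg]
          rw [he]
          refine H.add_mem (H.neg_mem ?_) (H.neg_mem ?_)
          · rw [lam_comp]; exact ih _ y hy
          · have hY1 : starOp (lam (-(lam g z))⁻¹ (lam g z)) y ∈ Y (j+1) := hYstep j _ y hy
            have hmem := ihd (j+1) (by omega) (-z) (AddSubgroup.neg_mem _ hz) g _ hY1
            rwa [lam_neg] at hmem


-- ===== the graded subgroups Ψ and the class bookkeeping =====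

def Dk (B : Type*) [SkewBrace B] (κ : ℕ × ℕ × ℕ) : AddSubgroup B :=
  (Rs B κ.1 ⊓ Ls B κ.2.1) ⊓ Cs B κ.2.2

def muK (m t : ℕ) (κ : ℕ × ℕ × ℕ) : ℕ := (κ.1 * (t+1) + κ.2.2) * (m+1) + κ.2.1

def inR (s m t : ℕ) (κ : ℕ × ℕ × ℕ) : Prop := κ.1 ≤ s ∧ κ.2.1 ≤ m ∧ κ.2.2 ≤ t

theorem inR_mk {s m t a b c : ℕ} (h1 : a ≤ s) (h2 : b ≤ m) (h3 : c ≤ t) :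
    inR s m t (a, b, c) := ⟨h1, h2, h3⟩

def genSet (B : Type*) [SkewBrace B] (s m t d : ℕ) : Set B :=
  {x | ∃ κ : ℕ × ℕ × ℕ, inR s m t κ ∧ d ≤ muK m t κ ∧ x ∈ Dk B κ}

def Psi (B : Type*) [SkewBrace B] (s m t d : ℕ) : AddSubgroup B :=
  AddSubgroup.closure (genSet B s m t d)

theorem mem_Dk {κ : ℕ × ℕ × ℕ} {x : B} :
    x ∈ Dk B κ ↔ x ∈ Rs B κ.1 ∧ x ∈ Ls B κ.2.1 ∧ x ∈ Cs B κ.2.2 := by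
  simp [Dk, and_assoc]

theorem mem_Psi_of {s m t d : ℕ} {κ : ℕ × ℕ × ℕ} {x : B}
    (h1 : inR s m t κ) (h2 : d ≤ muK m t κ) (h3 : x ∈ Dk B κ) : x ∈ Psi B s m t d :=
  AddSubgroup.subset_closure ⟨κ, h1, h2, h3⟩

theorem Dk_lam {κ : ℕ × ℕ × ℕ} {x : B} (g : B) (hx : x ∈ Dk B κ) : lam g x ∈ Dk B κ := by
  rw [mem_Dk] at hx ⊢
  exact ⟨Rs_lam _ g x hx.1, Ls_lam _ g x hx.2.1, Cs_lam _ g x hx.2.2⟩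

theorem genSet_lam {s m t d : ℕ} (g : B) {x : B} (hx : x ∈ genSet B s m t d) :
    lam g x ∈ genSet B s m t d := by
  obtain ⟨κ, h1, h2, h3⟩ := hx
  exact ⟨κ, h1, h2, Dk_lam g h3⟩

-- arithmetic lemmas for μ
theorem mu_comm_step {s m t a b c : ℕ} (hb : b ≤ m) :
    muK m t (a, b, c) + 1 ≤ muK m t (a, 0, c+1) := by
  have he : (a*(t+1)+(c+1))*(m+1) = (a*(t+1)+c)*(m+1) + (m+1) := by ring
  simp only [muK] at *
  omega

theorem mu_starl_step {s m t a b c : ℕ} (hb : b ≤ m) (hc : c ≤ t) :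
    muK m t (a, b, c) + 1 ≤ muK m t (a+1, 1, 0) := by
  simp only [muK]
  have h1 : (a * (t+1) + c) * (m+1) + (t + 1 - c) * (m + 1) = (a*(t+1) + (t+1)) * (m+1) := by
    rw [← add_mul]; congr 1; omega
  have h2 : m + 1 ≤ (t + 1 - c) * (m + 1) := Nat.le_mul_of_pos_left (m+1) (by omega)
  have h4 : ((a+1) * (t+1) + 0) * (m+1) = (a*(t+1) + (t+1)) * (m+1) := by ring
  omega

theorem mu_starr_step {s m t a b c : ℕ} :
    muK m t (a, b, c) + 1 ≤ muK m t (a, b+1, c) := by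
  simp only [muK]; omega

theorem mu_le_max {s m t a b c : ℕ} (ha : a ≤ s) (hb : b ≤ m) (hc : c ≤ t) :
    muK m t (a, b, c) ≤ muK m t (s, m, t) := by
  simp only [muK]
  have h1 : (a * (t+1) + c) * (m+1) ≤ (s * (t+1) + t) * (m+1) :=
    Nat.mul_le_mul_right _ (add_le_add (Nat.mul_le_mul_right _ ha) hc)
  omega

theorem Psi_normal {s m t d : ℕ} (hC : Cs B t = ⊥) :
    ∀ (c x : B), x ∈ Psi B s m t d → c + x - c ∈ Psi B s m t d := by
  refine closure_norm _ ?_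
  rintro c z ⟨⟨a, b, cc⟩, hr, hmu, hz⟩
  rw [conj_eq_add_comm]
  refine AddSubgroup.add_mem _ (mem_Psi_of hr hmu hz) ?_
  rw [mem_Dk] at hz
  have hz1 : z ∈ Rs B a := hz.1
  have hzl : z ∈ Ls B b := hz.2.1
  have hzc : z ∈ Cs B cc := hz.2.2
  rcases Nat.lt_or_ge cc t with hcc | hcc
  · -- the commutator lands in class (a, 0, cc+1)
    have hcm : -z + c + z - c ∈ Dk B (a, 0, cc+1) := by
      rw [mem_Dk]
      refine ⟨?_, ?_, ?_⟩
      · have h1 : (-z) + (c + z - c) ∈ Rs B a :=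
          AddSubgroup.add_mem _ (AddSubgroup.neg_mem _ hz1) (Rs_normal a c z hz1)
        have he : (-z) + (c + z - c) = -z + c + z - c := by
          simp [sub_eq_add_neg, add_assoc]
        rwa [he] at h1
      · exact mem_Ls_zero _
      · have h1 := comm_mem_Cs (AddSubgroup.neg_mem _ hzc) c
        have he : -z + c - -z - c = -z + c + z - c := by
          simp [sub_eq_add_neg]
        rwa [he] at h1
    refine mem_Psi_of (κ := (a, 0, cc+1)) (inR_mk hr.1 (by omega) (by omega)) ?_ hcm
    exact le_trans hmu (Nat.le_of_succ_le
      (mu_comm_step (s := s) (m := m) (t := t) (a := a) (b := b) (c := cc) hr.2.1))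
  · -- cc = t : z = 0
    have hz0 : z = 0 := by
      have : z ∈ Cs B t := Cs_anti (by omega) hzc
      rw [hC] at this
      simpa using this
    rw [hz0]
    have he : -(0:B) + c + 0 - c = 0 := by simp
    rw [he]
    exact AddSubgroup.zero_mem _

-- star with deep left factor
theorem Psi_star_left {s m t d : ℕ} (hs : 1 ≤ s) (hm : 1 ≤ m)
    (hR : Rs B s = ⊥) (hL : Ls B m = ⊥) :
    ∀ x ∈ Psi B s m t d, ∀ y : B, starOp x y ∈ Psi B s m t (d+1) := by
  intro x hx y
  have hXY : ∀ x' ∈ genSet B s m t d, ∀ j, ∀ y' ∈ (Ls B j : Set B),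
      starOp x' y' ∈ Psi B s m t (d+1) := by
    rintro x' ⟨⟨a, b, c⟩, hr, hmu, hx'⟩ j y' hy'
    rw [mem_Dk] at hx'
    have hx1 : x' ∈ Rs B a := hx'.1
    rcases Nat.lt_or_ge a s with ha | ha
    · refine mem_Psi_of (κ := (a+1, 1, 0)) (inR_mk (by omega) (by omega) (by omega)) ?_ ?_
      · exact le_trans (Nat.succ_le_succ hmu)
          (mu_starl_step (s := s) (m := m) (t := t) (a := a) (b := b) (c := c) hr.2.1 hr.2.2)
      · rw [mem_Dk]
        exact ⟨star_mem_Rs hx1 y', star_mem_Ls x' (mem_Ls_zero y'), mem_Cs_zero _⟩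
    · have hx0 : x' = 0 := by
        have : x' ∈ Rs B s := Rs_anti (by omega) hx1
        rw [hR] at this; simpa using this
      rw [hx0, zero_star]
      exact AddSubgroup.zero_mem _
  exact star_left_key (genSet B s m t d) (fun g x hx => genSet_lam g hx) (Psi B s m t (d+1))
    (fun j => (Ls B j : Set B)) (fun j v y hy => star_mem_Ls v hy) m
    (fun j hj y hy => by
      have h1 : y ∈ Ls B m := Ls_anti hj hy
      rw [hL] at h1; simpa using h1)
    hXY 0 x hx y (mem_Ls_zero y)

-- star with deep right factor
theorem Psi_star_right {s m t d : ℕ} (hm : 1 ≤ m) (hL : Ls B m = ⊥) (hC : Cs B t = ⊥) :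
    ∀ y ∈ Psi B s m t d, ∀ x : B, starOp x y ∈ Psi B s m t (d+1) := by
  intro y hy
  induction hy using AddSubgroup.closure_induction with
  | mem y₀ hy₀ =>
      intro x
      obtain ⟨⟨a, b, c⟩, hr, hmu, hmem⟩ := hy₀
      rw [mem_Dk] at hmem
      have hm1 : y₀ ∈ Rs B a := hmem.1
      have hml : y₀ ∈ Ls B b := hmem.2.1
      have hmc : y₀ ∈ Cs B c := hmem.2.2
      rcases Nat.lt_or_ge b m with hb | hb
      · refine mem_Psi_of (κ := (a, b+1, c)) (inR_mk hr.1 (by omega) hr.2.2) ?_ ?_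
        · exact le_trans (Nat.succ_le_succ hmu)
            (mu_starr_step (s := s) (m := m) (t := t) (a := a) (b := b) (c := c))
        · rw [mem_Dk]
          refine ⟨?_, star_mem_Ls x hml, ?_⟩
          · rw [star_eq]; exact AddSubgroup.sub_mem _ (Rs_lam _ x _ hm1) hm1
          · rw [star_eq]; exact AddSubgroup.sub_mem _ (Cs_lam _ x _ hmc) hmc
      · have hy0 : y₀ = 0 := by
          have h1 : y₀ ∈ Ls B m := Ls_anti (by omega) hml
          rw [hL] at h1; simpa using h1
        rw [hy0, star_zero]; exact AddSubgroup.zero_mem _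
  | zero => intro x; rw [star_zero]; exact AddSubgroup.zero_mem _
  | add y₁ y₂ h₁ h₂ ih₁ ih₂ =>
      intro x
      rw [star_add_right]
      have hmid : y₁ + starOp x y₂ - y₁ ∈ Psi B s m t (d+1) := Psi_normal hC y₁ _ (ih₂ x)
      have he : starOp x y₁ + y₁ + starOp x y₂ - y₁ =
          starOp x y₁ + (y₁ + starOp x y₂ - y₁) := by
        simp [sub_eq_add_neg, add_assoc]
      rw [he]
      exact AddSubgroup.add_mem _ (ih₁ x) hmid
  | neg y h ih =>
      intro x
      rw [star_neg_right]
      have h1 := Psi_normal hC (-y) _ (AddSubgroup.neg_mem _ (ih x))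
      have he : -y + -(starOp x y) - -y = -y + -(starOp x y) + y := by simp [sub_eq_add_neg]
      rwa [he] at h1

-- additive commutator with deep left factor
theorem Psi_comm_left {s m t d : ℕ} (hC : Cs B t = ⊥) :
    ∀ x ∈ Psi B s m t d, ∀ y : B, x + y - x - y ∈ Psi B s m t (d+1) := by
  intro x hx
  induction hx using AddSubgroup.closure_induction with
  | mem x₀ hx₀ =>
      intro y
      obtain ⟨⟨a, b, c⟩, hr, hmu, hmem⟩ := hx₀
      rw [mem_Dk] at hmem
      have hm1 : x₀ ∈ Rs B a := hmem.1
      have hmc : x₀ ∈ Cs B c := hmem.2.2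
      rcases Nat.lt_or_ge c t with hc | hc
      · refine mem_Psi_of (κ := (a, 0, c+1)) (inR_mk hr.1 (by omega) (by omega)) ?_ ?_
        · exact le_trans (Nat.succ_le_succ hmu)
            (mu_comm_step (s := s) (m := m) (t := t) (a := a) (b := b) (c := c) hr.2.1)
        · rw [mem_Dk]
          refine ⟨?_, mem_Ls_zero _, comm_mem_Cs hmc y⟩
          have h1 : x₀ + (y + (-x₀) - y) ∈ Rs B a :=
            AddSubgroup.add_mem _ hm1 (Rs_normal a y (-x₀) (AddSubgroup.neg_mem _ hm1))
          have he : x₀ + (y + (-x₀) - y) = x₀ + y - x₀ - y := by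
            simp [sub_eq_add_neg, add_assoc]
          rwa [he] at h1
      · have hx0 : x₀ = 0 := by
          have h1 : x₀ ∈ Cs B t := Cs_anti (by omega) hmc
          rw [hC] at h1; simpa using h1
        rw [hx0]
        have he : (0:B) + y - 0 - y = 0 := by simp
        rw [he]; exact AddSubgroup.zero_mem _
  | zero =>
      intro y
      have he : (0:B) + y - 0 - y = 0 := by simp
      rw [he]; exact AddSubgroup.zero_mem _
  | add x₁ x₂ h₁ h₂ ih₁ ih₂ =>
      intro y
      rw [comm_add_left]
      exact AddSubgroup.add_mem _ (Psi_normal hC x₁ _ (ih₂ y)) (ih₁ y)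
  | neg x h ih =>
      intro y
      rw [comm_neg_left]
      have h1 := Psi_normal hC (-x) _ (AddSubgroup.neg_mem _ (ih y))
      have he : -x + -(x + y - x - y) - -x = -x + -(x + y - x - y) + x := by
        simp [sub_eq_add_neg]
      rwa [he] at h1

theorem Psi_comm_right {s m t d : ℕ} (hC : Cs B t = ⊥) :
    ∀ y ∈ Psi B s m t d, ∀ x : B, x + y - x - y ∈ Psi B s m t (d+1) := by
  intro y hy x
  have h1 := Psi_comm_left hC y hy x
  rw [← neg_comm y x]
  exact AddSubgroup.neg_mem _ h1


-- ===== main induction and conclusion =====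

theorem Psi_bot {s m t : ℕ} : Psi B s m t (muK m t (s, m, t) + 1) = ⊥ := by
  refine le_antisymm ?_ bot_le
  refine (AddSubgroup.closure_le _).mpr ?_
  rintro x ⟨⟨a, b, c⟩, hr, hmu, hx⟩
  exfalso
  have ha : a ≤ s := hr.1
  have hb : b ≤ m := hr.2.1
  have hc : c ≤ t := hr.2.2
  have h1 : muK m t (a, b, c) ≤ muK m t (s, m, t) := mu_le_max (s := s) ha hb hc
  omega

def gD : ℕ → ℕ
  | 0 => 0
  | (d+1) => 2 * gD d + 1

theorem main_lemma {s m t : ℕ} (hs : 1 ≤ s) (hm : 1 ≤ m)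
    (hR : Rs B s = ⊥) (hL : Ls B m = ⊥) (hC : Cs B t = ⊥) :
    ∀ d, Gs B (gD d) ≤ Psi B s m t d := by
  intro d
  induction d with
  | zero =>
      intro x _
      refine mem_Psi_of (κ := (0,0,0)) (inR_mk (by omega) (by omega) (by omega))
        (Nat.zero_le _) ?_
      rw [mem_Dk]
      exact ⟨by rw [Rs_zero]; trivial, mem_Ls_zero x, mem_Cs_zero x⟩
  | succ d ih =>
      show Gs B (2 * gD d + 1) ≤ Psi B s m t (d+1)
      rw [Gs]
      refine (AddSubgroup.closure_le _).mpr ?_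
      intro z hz
      obtain ⟨j, x, hx, y, hy, hz'⟩ := Set.mem_iUnion.mp hz
      rcases le_or_gt (gD d) j.1 with hj | hj
      · have hx' : x ∈ Psi B s m t d := ih (Gs_anti hj hx)
        rcases hz' with rfl | rfl
        · exact Psi_star_left hs hm hR hL x hx' y
        · exact Psi_comm_left hC x hx' y
      · have hjy : gD d ≤ 2 * gD d - j.1 := by omega
        have hy' : y ∈ Psi B s m t d := ih (Gs_anti hjy hy)
        rcases hz' with rfl | rfl
        · exact Psi_star_right hm hL hC y hy' x
        · exact Psi_comm_right hC y hy' x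

theorem gamma_to_ann (N : ℕ) (hN : Gs B N = ⊥) : annSeries B N = Set.univ := by
  have key : ∀ k, k ≤ N → (Gs B (N - k) : Set B) ⊆ annSeries B k := by
    intro k
    induction k with
    | zero =>
        intro _ x hx
        rw [Nat.sub_zero, hN] at hx
        rw [annSeries_zero]
        simpa using hx
    | succ k ih =>
        intro hk x hx
        have hx' : x ∈ Gs B (N - (k+1)) := hx
        rw [mem_ann_succ]
        intro a
        have hstep : N - k = (N - (k+1)) + 1 := by omega
        have hs1 : starOp x a ∈ Gs B ((N - (k+1))+1) := by
          simpa using star_mem_Gs hx' (mem_Gs_zero a)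
        have hs2 : starOp a x ∈ Gs B ((N - (k+1))+1) := by
          simpa using star_mem_Gs (mem_Gs_zero a) hx'
        have hcm : x + a - x - a ∈ Gs B ((N - (k+1))+1) := by
          simpa using comm_mem_Gs hx' (mem_Gs_zero a)
        have hsub : (Gs B ((N - (k+1))+1) : Set B) ⊆ annSeries B k := by
          rw [← hstep]; exact ih (by omega)
        refine ⟨?_, ?_, ?_⟩
        · rw [id_E1]
          exact (annPack k).add (hsub (Gs_normal _ x _ hs1))
            ((annPack k).add (hsub hcm)
              (hsub (Gs_normal _ a _ (AddSubgroup.neg_mem _ hs2))))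
        · rw [id_E2]
          exact hsub (Gs_normal _ x _ hs1)
        · rw [id_E3]
          exact hsub hcm
  have h0 := key N (le_refl N)
  rw [Nat.sub_self] at h0
  apply Set.eq_univ_of_univ_subset
  intro x _
  exact h0 (mem_Gs_zero x)

theorem coe_eq_singleton_to_bot {H : AddSubgroup B} (h : (H : Set B) = {0}) : H = ⊥ := by
  refine le_antisymm ?_ bot_le
  intro x hx
  have : x ∈ ({0} : Set B) := h ▸ hx
  simpa using this

theorem left_right_to_ann (hnt : Group.IsNilpotent (Multiplicative B))
    (hLn : LeftNilpotent B) (hRn : RightNilpotent B) : AnnNilpotent B := by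
  obtain ⟨m₀, hm₀⟩ := hLn
  obtain ⟨s₀, hs₀⟩ := hRn
  obtain ⟨t₀, ht₀⟩ := Cs_bot_of_nilpotent hnt
  have hL : Ls B (m₀+1) = ⊥ := by
    have h1 : Ls B m₀ = ⊥ := by
      apply coe_eq_singleton_to_bot
      rw [← leftPow_eq]; exact hm₀
    exact le_antisymm (h1 ▸ Ls_succ_le m₀) bot_le
  have hR : Rs B (s₀+1) = ⊥ := by
    have h1 : Rs B s₀ = ⊥ := by
      apply coe_eq_singleton_to_bot
      rw [← rightPow_eq]; exact hs₀
    exact le_antisymm (h1 ▸ Rs_succ_le s₀) bot_le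
  have hC : Cs B (t₀+1) = ⊥ := by
    exact le_antisymm (ht₀ ▸ Cs_succ_le t₀) bot_le
  have hGN : Gs B (gD (muK (m₀+1) (t₀+1) (s₀+1, m₀+1, t₀+1) + 1)) = ⊥ := by
    refine le_antisymm ?_ bot_le
    refine le_trans (main_lemma (by omega) (by omega) hR hL hC _) ?_
    exact le_of_eq Psi_bot
  exact ⟨_, gamma_to_ann _ hGN⟩


/-- Corollary 2.9: for a skew brace of nilpotent type the following are
equivalent: (1) annihilator nilpotent; (2) left and right nilpotent;
(3) strongly nilpotent. -/
theorem stmt2 {B : Type*} [SkewBrace B]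
    (hnt : Group.IsNilpotent (Multiplicative B)) :
    (AnnNilpotent B ↔ LeftNilpotent B ∧ RightNilpotent B) ∧
    (AnnNilpotent B ↔ StronglyNilpotent B) := by
  constructor
  · constructor
    · intro h
      exact strong_to_left_right (ann_to_strong h)
    · rintro ⟨hl, hr⟩
      exact left_right_to_ann hnt hl hr
  · constructor
    · exact ann_to_strong
    · intro h
      obtain ⟨hl, hr⟩ := strong_to_left_right h
      exact left_right_to_ann hnt hl hr

end SkewBrace
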